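/- Let F ⊆ [0,1] be closed with complement F^c = ⋃ᵢ Gᵢ a countable union of disjoint open intervals, and for each i let xᵢ be an endpoint (left or right) of Gᵢ and mᵢ the length of Gᵢ. Then the measure μ = λ restricted to F plus Σᵢ mᵢ δ_{xᵢ} is a quasi-uniform probability measure on [0,1]. -/

import Mathlib

open MeasureTheory

/-- A measure `μ` on `ℝ` (thought of as a probability measure on `[0,1]`) is quasi-uniform if
`μ {x ∈ [0,1] : μ[0,x) ≤ x ≤ μ[0,x]} = 1`. -/
def QuasiUniform (μ : Measure ℝ) : Prop :=
  μ {x : ℝ | x ∈ Set.Icc (0:ℝ) 1 ∧ μ (Set.Ico 0 x) ≤ ENNReal.ofReal x ∧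
      ENNReal.ofReal x ≤ μ (Set.Icc 0 x)} = 1

/-- Let `F ⊆ [0,1]` be closed, with `[0,1] \ F` a countable disjoint union of open intervals
`Gᵢ = (aᵢ, bᵢ)`.  For each `i` let `xᵢ` be one of the two endpoints of `Gᵢ` and `mᵢ = bᵢ - aᵢ`
its length.  Then `λ|_F + Σᵢ mᵢ δ_{xᵢ}` is a quasi-uniform probability measure. -/
theorem restrict_add_atoms_quasiUniform
    (F : Set ℝ) (hF : IsClosed F) (hFsub : F ⊆ Set.Icc 0 1)
    (ι : Type) [Countable ι] (a b x : ι → ℝ)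
    (hab : ∀ i, a i < b i)
    (hdisj : Pairwise fun i j => Disjoint (Set.Ioo (a i) (b i)) (Set.Ioo (a j) (b j)))
    (hcover : Set.Icc (0:ℝ) 1 \ F = ⋃ i, Set.Ioo (a i) (b i))
    (hx : ∀ i, x i = a i ∨ x i = b i) :
    IsProbabilityMeasure
        (volume.restrict F +
          Measure.sum fun i => ENNReal.ofReal (b i - a i) • Measure.dirac (x i)) ∧
      QuasiUniform
        (volume.restrict F +
          Measure.sum fun i => ENNReal.ofReal (b i - a i) • Measure.dirac (x i)) := by
  have hFm : MeasurableSet F := hF.measurableSet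
  -- Each interval lies in `[0,1] \ F`.
  have hIoo_sub : ∀ i, Set.Ioo (a i) (b i) ⊆ Set.Icc 0 1 \ F := by
    intro i; rw [hcover]; exact Set.subset_iUnion (fun i => Set.Ioo (a i) (b i)) i
  have ha0 : ∀ i, 0 ≤ a i := by
    intro i
    by_contra h
    push_neg at h
    obtain ⟨y, hy1, hy2⟩ := exists_between (lt_min h (hab i))
    exact absurd ((hIoo_sub i ⟨hy1, hy2.trans_le (min_le_right _ _)⟩).1.1)
      (not_le.mpr (hy2.trans_le (min_le_left _ _)))
  have hb1 : ∀ i, b i ≤ 1 := by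
    intro i
    by_contra h
    push_neg at h
    obtain ⟨y, hy1, hy2⟩ := exists_between (max_lt (hab i) h)
    exact absurd ((hIoo_sub i ⟨(le_max_left _ _).trans_lt hy1, hy2⟩).1.2)
      (not_le.mpr ((le_max_right _ _).trans_lt hy1))
  -- Endpoints of the intervals belong to `F`.
  have haF : ∀ i, a i ∈ F := by
    intro i
    by_contra hai
    have hmem : a i ∈ Set.Icc (0:ℝ) 1 \ F := ⟨⟨ha0 i, (hab i).le.trans (hb1 i)⟩, hai⟩
    rw [hcover] at hmem
    obtain ⟨j, hj⟩ := Set.mem_iUnion.mp hmem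
    have hji : j ≠ i := by rintro rfl; exact lt_irrefl _ hj.1
    obtain ⟨y, hy1, hy2⟩ := exists_between (lt_min (hab i) hj.2)
    exact Set.disjoint_left.mp (hdisj hji.symm)
      ⟨hy1, hy2.trans_le (min_le_left _ _)⟩
      ⟨hj.1.trans hy1, hy2.trans_le (min_le_right _ _)⟩
  have hbF : ∀ i, b i ∈ F := by
    intro i
    by_contra hbi
    have hmem : b i ∈ Set.Icc (0:ℝ) 1 \ F := ⟨⟨(ha0 i).trans (hab i).le, hb1 i⟩, hbi⟩
    rw [hcover] at hmem
    obtain ⟨j, hj⟩ := Set.mem_iUnion.mp hmem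
    have hji : j ≠ i := by rintro rfl; exact lt_irrefl _ hj.2
    obtain ⟨y, hy1, hy2⟩ := exists_between (max_lt (hab i) hj.1)
    exact Set.disjoint_left.mp (hdisj hji.symm)
      ⟨(le_max_left _ _).trans_lt hy1, hy2⟩
      ⟨(le_max_right _ _).trans_lt hy1, hy2.trans hj.2⟩
  have hxF : ∀ i, x i ∈ F := by
    intro i; rcases hx i with h | h <;> rw [h]
    exacts [haF i, hbF i]
  -- Summing lengths of (parts of) the disjoint intervals.
  have hsum : ∀ s : Set ℝ, MeasurableSet s →
      (∑' i, volume (Set.Ioo (a i) (b i) ∩ s)) = volume ((Set.Icc (0:ℝ) 1 \ F) ∩ s) := by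
    intro s hs
    rw [← measure_iUnion (fun i j hij =>
        (hdisj hij).mono Set.inter_subset_left Set.inter_subset_left)
      (fun i => measurableSet_Ioo.inter hs), ← Set.iUnion_inter, ← hcover]
  set ν : Measure ℝ := Measure.sum fun i => ENNReal.ofReal (b i - a i) • Measure.dirac (x i)
    with hνdef
  set μ : Measure ℝ := volume.restrict F + ν with hμdef
  have hνapp : ∀ s : Set ℝ, MeasurableSet s →
      ν s = ∑' i, ENNReal.ofReal (b i - a i) * s.indicator 1 (x i) := by
    intro s hs
    rw [hνdef, Measure.sum_apply _ hs]
    simp only [Measure.smul_apply, Measure.dirac_apply' _ hs, smul_eq_mul]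
  have hμapp : ∀ s : Set ℝ, MeasurableSet s →
      μ s = volume (s ∩ F) + ∑' i, ENNReal.ofReal (b i - a i) * s.indicator 1 (x i) := by
    intro s hs
    rw [hμdef, Measure.add_apply, Measure.restrict_apply hs, hνapp s hs]
  have hνIoo : ∀ i, volume (Set.Ioo (a i) (b i)) = ENNReal.ofReal (b i - a i) := fun i =>
    Real.volume_Ioo
  -- Total mass is 1.
  have huniv : μ Set.univ = 1 := by
    rw [hμapp _ MeasurableSet.univ]
    have h1 : (∑' i, ENNReal.ofReal (b i - a i) * Set.indicator Set.univ 1 (x i))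
        = volume (Set.Icc (0:ℝ) 1 \ F) := by
      rw [← Set.inter_univ (Set.Icc (0:ℝ) 1 \ F), ← hsum _ MeasurableSet.univ]
      congr 1; funext i
      rw [Set.inter_univ, hνIoo i, Set.indicator_of_mem (Set.mem_univ _), Pi.one_apply, mul_one]
    have h2 := measure_inter_add_diff (μ := volume) (Set.Icc (0:ℝ) 1) hFm
    rw [Set.inter_eq_self_of_subset_right hFsub] at h2
    rw [h1, Set.univ_inter, h2]
    simp [Real.volume_Icc]
  have hprob : IsProbabilityMeasure μ := ⟨huniv⟩
  refine ⟨hprob, ?_⟩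
  -- The two quasi-uniformity inequalities hold at every point of `F`.
  have hkey : ∀ t ∈ F,
      μ (Set.Ico 0 t) ≤ ENNReal.ofReal t ∧ ENNReal.ofReal t ≤ μ (Set.Icc 0 t) := by
    intro t htF
    obtain ⟨ht0, ht1⟩ := hFsub htF
    have htIoo : ∀ i, t ∉ Set.Ioo (a i) (b i) := fun i h => (hIoo_sub i h).2 htF
    constructor
    · -- μ [0,t) ≤ t
      rw [hμapp _ measurableSet_Ico]
      have hterm : ∀ i, ENNReal.ofReal (b i - a i) * (Set.Ico (0:ℝ) t).indicator 1 (x i)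
          ≤ volume (Set.Ioo (a i) (b i) ∩ Set.Ico 0 t) := by
        intro i
        by_cases hxi : x i ∈ Set.Ico (0:ℝ) t
        · rw [Set.indicator_of_mem hxi, Pi.one_apply, mul_one]
          have hbt : b i ≤ t := by
            rcases hx i with h | h
            · by_contra hc
              push_neg at hc
              exact htIoo i ⟨h ▸ hxi.2, hc⟩
            · exact h ▸ hxi.2.le
          have hss : Set.Ioo (a i) (b i) ∩ Set.Ico 0 t = Set.Ioo (a i) (b i) :=
            Set.inter_eq_self_of_subset_left fun y hy =>
              ⟨(ha0 i).trans hy.1.le, hy.2.trans_le hbt⟩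
          rw [hss, Real.volume_Ioo]
        · rw [Set.indicator_of_notMem hxi, mul_zero]
          exact zero_le
      calc volume (Set.Ico 0 t ∩ F)
            + ∑' i, ENNReal.ofReal (b i - a i) * (Set.Ico (0:ℝ) t).indicator 1 (x i)
          ≤ volume (Set.Ico 0 t ∩ F) + ∑' i, volume (Set.Ioo (a i) (b i) ∩ Set.Ico 0 t) := by
            gcongr
            exact hterm _
        _ = volume (Set.Ico 0 t ∩ F) + volume (Set.Ico 0 t \ F) := by
            rw [hsum _ measurableSet_Ico]
            congr 2
            ext y
            constructor
            · rintro ⟨⟨_, hyF⟩, hy⟩; exact ⟨hy, hyF⟩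
            · rintro ⟨hy, hyF⟩; exact ⟨⟨⟨hy.1, hy.2.le.trans ht1⟩, hyF⟩, hy⟩
        _ = volume (Set.Ico 0 t) := measure_inter_add_diff _ hFm
        _ = ENNReal.ofReal t := by rw [Real.volume_Ico, sub_zero]
    · -- t ≤ μ [0,t]
      rw [hμapp _ measurableSet_Icc]
      have hterm : ∀ i, volume (Set.Ioo (a i) (b i) ∩ Set.Icc 0 t)
          ≤ ENNReal.ofReal (b i - a i) * (Set.Icc (0:ℝ) t).indicator 1 (x i) := by
        intro i
        by_cases hxi : x i ∈ Set.Icc (0:ℝ) t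
        · rw [Set.indicator_of_mem hxi, Pi.one_apply, mul_one,
            ← Real.volume_Ioo (a := a i) (b := b i)]
          exact measure_mono Set.inter_subset_left
        · rw [Set.indicator_of_notMem hxi, mul_zero]
          have hx0 : 0 ≤ x i := (hFsub (hxF i)).1
          have htx : t < x i := by
            by_contra hc
            exact hxi ⟨hx0, not_lt.mp hc⟩
          have hta : t ≤ a i := by
            rcases hx i with h | h
            · exact (h ▸ htx).le
            · by_contra hc
              push_neg at hc
              exact htIoo i ⟨hc, h ▸ htx⟩
          have hempty : Set.Ioo (a i) (b i) ∩ Set.Icc 0 t = ∅ := by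
            ext y
            simp only [Set.mem_inter_iff, Set.mem_Ioo, Set.mem_Icc, Set.mem_empty_iff_false,
              iff_false, not_and, and_imp]
            intro hy1 _ _ hy2
            exact absurd (hta.trans_lt hy1) (not_lt.mpr hy2)
          rw [hempty, measure_empty]
      calc ENNReal.ofReal t = volume (Set.Icc 0 t) := by rw [Real.volume_Icc, sub_zero]
        _ = volume (Set.Icc 0 t ∩ F) + volume (Set.Icc 0 t \ F) :=
            (measure_inter_add_diff _ hFm).symm
        _ = volume (Set.Icc 0 t ∩ F) + ∑' i, volume (Set.Ioo (a i) (b i) ∩ Set.Icc 0 t) := by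
            rw [hsum _ measurableSet_Icc]
            congr 2
            ext y
            constructor
            · rintro ⟨hy, hyF⟩; exact ⟨⟨⟨hy.1, hy.2.trans ht1⟩, hyF⟩, hy⟩
            · rintro ⟨⟨_, hyF⟩, hy⟩; exact ⟨hy, hyF⟩
        _ ≤ volume (Set.Icc 0 t ∩ F)
            + ∑' i, ENNReal.ofReal (b i - a i) * (Set.Icc (0:ℝ) t).indicator 1 (x i) := by
            gcongr
            exact hterm _
  -- `μ` is carried by `F`.
  have hμFc : μ Fᶜ = 0 := by
    rw [hμapp _ hFm.compl, Set.compl_inter_self]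
    have hz : ∀ i, (Fᶜ).indicator (1 : ℝ → ENNReal) (x i) = 0 := fun i =>
      Set.indicator_of_notMem (Set.notMem_compl_iff.mpr (hxF i)) _
    simp [hz]
  -- Conclude.
  show μ {y : ℝ | y ∈ Set.Icc (0:ℝ) 1 ∧ μ (Set.Ico 0 y) ≤ ENNReal.ofReal y ∧
      ENNReal.ofReal y ≤ μ (Set.Icc 0 y)} = 1
  set S : Set ℝ := {y : ℝ | y ∈ Set.Icc (0:ℝ) 1 ∧ μ (Set.Ico 0 y) ≤ ENNReal.ofReal y ∧
      ENNReal.ofReal y ≤ μ (Set.Icc 0 y)} with hSdef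
  have hFS : F ⊆ S := fun t ht => ⟨hFsub ht, (hkey t ht).1, (hkey t ht).2⟩
  refine le_antisymm ?_ ?_
  · rw [← huniv]
    exact measure_mono (Set.subset_univ _)
  · calc (1 : ENNReal) = μ Set.univ := huniv.symm
      _ ≤ μ (S ∪ Fᶜ) := measure_mono (by
          intro y _
          by_cases hy : y ∈ F
          · exact Or.inl (hFS hy)
          · exact Or.inr hy)
      _ ≤ μ S + μ Fᶜ := measure_union_le _ _
      _ = μ S := by rw [hμFc, add_zero]
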